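/- Let G be a finite simple graph on n vertices with m edges. Then E_per(G) = 2√m if and only if G is isomorphic to the disjoint union of the star K_{1,m} on m+1 vertices and n − m − 1 isolated vertices, i.e., G ≅ K_{1,m} ⊔ (n−m−1)K_1. -/

import Mathlib

open Polynomial Matrix

/-- The permanental polynomial `per(x·I − A)` of a square matrix `A`. -/
noncomputable def permPoly {n : ℕ} {R : Type*} [CommRing R] (A : Matrix (Fin n) (Fin n) R) :
    Polynomial R :=
  ((Polynomial.X : R[X]) • (1 : Matrix (Fin n) (Fin n) R[X]) - A.map Polynomial.C).permanent

/-- The permanental polynomial `π(G,x) = per(x·I − A(G))` of a graph, over `ℂ`. -/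
noncomputable def graphPermPoly {n : ℕ} (G : SimpleGraph (Fin n)) : Polynomial ℂ :=
  letI := Classical.decRel G.Adj
  permPoly (G.adjMatrix ℂ)

/-- The permanental energy `E_per(G)`: the sum of the moduli of the roots (with
multiplicity) of the permanental polynomial of `G`. -/
noncomputable def perEnergy {n : ℕ} (G : SimpleGraph (Fin n)) : ℝ :=
  ((graphPermPoly G).roots.map (fun z : ℂ => ‖z‖)).sum

/-- The graph on `n` vertices consisting of the star `K_{1,m}` (center `0`, leaves
`1,…,m`) together with `n − m − 1` isolated vertices. -/
def starPlusIsolated (n m : ℕ) : SimpleGraph (Fin n) where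
  Adj u v := (u.val = 0 ∧ 1 ≤ v.val ∧ v.val ≤ m) ∨ (v.val = 0 ∧ 1 ≤ u.val ∧ u.val ≤ m)
  symm := ⟨by intro u v h; tauto⟩
  loopless := ⟨by rintro u (⟨h0, h1, -⟩ | ⟨h0, h1, -⟩) <;> omega⟩

open Finset
namespace StarPerm

variable {n : ℕ} (G : SimpleGraph (Fin n)) [DecidableRel G.Adj]

/-- admissibility of a permutation: every non-fixed point is moved along an edge -/
def Adm (σ : Equiv.Perm (Fin n)) : Prop := ∀ i, σ i ≠ i → G.Adj i (σ i)

instance (σ : Equiv.Perm (Fin n)) : Decidable (Adm G σ) := by unfold Adm; infer_instance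

def fixc (σ : Equiv.Perm (Fin n)) : ℕ := (Finset.univ.filter fun i => σ i = i).card

theorem fixc_le (σ : Equiv.Perm (Fin n)) : fixc σ ≤ n := by
  unfold fixc
  simpa using Finset.card_filter_le Finset.univ (fun i => σ i = i)

theorem graphPermPoly_eq : graphPermPoly G = permPoly (G.adjMatrix ℂ) := by
  have h : (G.adjMatrix ℂ) = (letI := Classical.decRel G.Adj; G.adjMatrix ℂ) := by
    ext i j
    by_cases hadj : G.Adj i j <;> simp [SimpleGraph.adjMatrix, hadj]
  unfold graphPermPoly
  rw [← h]

theorem base : graphPermPoly G =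
    ∑ σ : Equiv.Perm (Fin n), if Adm G σ then
      (Polynomial.C ((-1 : ℂ) ^ (n - fixc σ))) * Polynomial.X ^ fixc σ else 0 := by
  rw [graphPermPoly_eq]
  unfold permPoly Matrix.permanent
  refine Finset.sum_congr rfl fun σ _ => ?_
  have hentry : ∀ i : Fin n,
      ((Polynomial.X : ℂ[X]) • (1 : Matrix (Fin n) (Fin n) ℂ[X]) -
        (G.adjMatrix ℂ).map Polynomial.C) (σ i) i =
      if σ i = i then Polynomial.X else - Polynomial.C (G.adjMatrix ℂ i (σ i)) := by
    intro i
    by_cases h : σ i = i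
    · rw [if_pos h]
      simp [Matrix.sub_apply, Matrix.smul_apply, Matrix.one_apply, h, Matrix.map_apply]
    · rw [if_neg h]
      have h2 : ¬ (σ i = i) := h
      simp [Matrix.sub_apply, Matrix.smul_apply, Matrix.one_apply, h, Matrix.map_apply,
        Ne.symm h2, G.adj_comm]
  rw [Finset.prod_congr rfl (fun i _ => hentry i)]
  rw [← Finset.prod_filter_mul_prod_filter_not Finset.univ (fun i => σ i = i)]
  have hfix : ∏ i ∈ Finset.univ.filter (fun i => σ i = i),
      (if σ i = i then Polynomial.X else - Polynomial.C (G.adjMatrix ℂ i (σ i)))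
      = Polynomial.X ^ fixc σ := by
    rw [Finset.prod_congr rfl (fun i hi => if_pos (Finset.mem_filter.mp hi).2)]
    simp [fixc]
  have hcard : (Finset.univ.filter (fun i => ¬ σ i = i)).card = n - fixc σ := by
    have := Finset.card_filter_add_card_filter_not (s := (Finset.univ : Finset (Fin n)))
      (p := fun i => σ i = i)
    simp only [Finset.card_univ, Fintype.card_fin] at this
    unfold fixc
    omega
  by_cases hadm : Adm G σ
  · rw [if_pos hadm]
    have hnon : ∏ i ∈ Finset.univ.filter (fun i => ¬ σ i = i),
        (if σ i = i then Polynomial.X else - Polynomial.C (G.adjMatrix ℂ i (σ i)))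
        = Polynomial.C ((-1 : ℂ) ^ (n - fixc σ)) := by
      have : ∀ i ∈ Finset.univ.filter (fun i => ¬ σ i = i),
          (if σ i = i then Polynomial.X else - Polynomial.C (G.adjMatrix ℂ i (σ i)))
          = (-1 : ℂ[X]) := by
        intro i hi
        have hi' := (Finset.mem_filter.mp hi).2
        rw [if_neg hi']
        have : G.adjMatrix ℂ i (σ i) = 1 := by
          simp [SimpleGraph.adjMatrix_apply, hadm i hi']
        rw [this]
        simp
      rw [Finset.prod_congr rfl this, Finset.prod_const, hcard]
      simp [map_pow]
    rw [hfix, hnon]; ring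
  · rw [if_neg hadm]
    unfold Adm at hadm
    push_neg at hadm
    obtain ⟨i, hi1, hi2⟩ := hadm
    have him : i ∈ Finset.univ.filter (fun i => ¬ σ i = i) := by
      simp [hi1]
    have hzero : (if σ i = i then Polynomial.X else - Polynomial.C (G.adjMatrix ℂ i (σ i)))
        = 0 := by
      rw [if_neg hi1]
      simp [SimpleGraph.adjMatrix_apply, hi2]
    rw [Finset.prod_eq_zero him hzero]
    ring


def nonfix (σ : Equiv.Perm (Fin n)) : Finset (Fin n) := Finset.univ.filter fun i => ¬ σ i = i

theorem fixc_add_nonfix (σ : Equiv.Perm (Fin n)) : fixc σ + (nonfix σ).card = n := by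
  have := Finset.card_filter_add_card_filter_not (s := (Finset.univ : Finset (Fin n)))
    (p := fun i => σ i = i)
  simpa [fixc, nonfix] using this

theorem mem_nonfix {σ : Equiv.Perm (Fin n)} {i : Fin n} : i ∈ nonfix σ ↔ σ i ≠ i := by
  simp [nonfix]

theorem apply_mem_nonfix {σ : Equiv.Perm (Fin n)} {i : Fin n} (h : i ∈ nonfix σ) :
    σ i ∈ nonfix σ := by
  rw [mem_nonfix] at *
  intro heq
  exact h (σ.injective heq)

theorem nonfix_swap {a b : Fin n} (hab : a ≠ b) : nonfix (Equiv.swap a b) = {a, b} := by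
  ext i
  simp only [mem_nonfix, Finset.mem_insert, Finset.mem_singleton]
  constructor
  · intro h
    by_contra hc
    push_neg at hc
    exact h (Equiv.swap_apply_of_ne_of_ne hc.1 hc.2)
  · rintro (rfl | rfl)
    · rw [Equiv.swap_apply_left]; exact Ne.symm hab
    · rw [Equiv.swap_apply_right]; exact hab

theorem eq_swap_of_nonfix_pair {σ : Equiv.Perm (Fin n)} {a b : Fin n} (hab : a ≠ b)
    (h : nonfix σ = {a, b}) : σ = Equiv.swap a b := by
  have ha : σ a = b := by
    have h1 : a ∈ nonfix σ := by rw [h]; simp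
    have h2 : σ a ∈ nonfix σ := apply_mem_nonfix h1
    rw [h] at h2
    simp only [Finset.mem_insert, Finset.mem_singleton] at h2
    rcases h2 with h2 | h2
    · exact absurd h2 (mem_nonfix.mp (by rw [h]; simp))
    · exact h2
  have hb : σ b = a := by
    have h1 : b ∈ nonfix σ := by rw [h]; simp
    have h2 : σ b ∈ nonfix σ := apply_mem_nonfix h1
    rw [h] at h2
    simp only [Finset.mem_insert, Finset.mem_singleton] at h2
    rcases h2 with h2 | h2
    · exact h2
    · exact absurd h2 (mem_nonfix.mp (by rw [h]; simp))
  apply Equiv.ext; intro i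
  by_cases hia : i = a
  · subst hia; rw [ha, Equiv.swap_apply_left]
  by_cases hib : i = b
  · subst hib; rw [hb, Equiv.swap_apply_right]
  · rw [Equiv.swap_apply_of_ne_of_ne hia hib]
    by_contra hc
    have : i ∈ nonfix σ := mem_nonfix.mpr hc
    rw [h] at this
    simp only [Finset.mem_insert, Finset.mem_singleton] at this
    tauto

theorem coeff_eq (k : ℕ) : (graphPermPoly G).coeff k =
    (-1 : ℂ) ^ (n - k) *
      ((Finset.univ.filter fun σ : Equiv.Perm (Fin n) => Adm G σ ∧ fixc σ = k).card : ℂ) := by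
  rw [base, Polynomial.finset_sum_coeff]
  have h : ∀ σ : Equiv.Perm (Fin n),
      (if Adm G σ then (Polynomial.C ((-1 : ℂ) ^ (n - fixc σ))) * Polynomial.X ^ fixc σ
        else 0).coeff k
      = if Adm G σ ∧ fixc σ = k then (-1 : ℂ) ^ (n - k) else 0 := by
    intro σ
    by_cases hadm : Adm G σ
    · rw [if_pos hadm]
      rw [Polynomial.coeff_C_mul, Polynomial.coeff_X_pow]
      by_cases hf : fixc σ = k
      · subst hf
        rw [if_pos rfl, if_pos ⟨hadm, rfl⟩, mul_one]
      · rw [if_neg (fun h => hf h.symm), if_neg (fun hc => hf hc.2), mul_zero]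
    · rw [if_neg hadm, if_neg (fun hc => hadm hc.1)]
      simp
  rw [Finset.sum_congr rfl (fun σ _ => h σ), Finset.sum_ite, Finset.sum_const,
    Finset.sum_const_zero, add_zero, nsmul_eq_mul, mul_comm]

theorem count_id : (Finset.univ.filter fun σ : Equiv.Perm (Fin n) =>
    Adm G σ ∧ fixc σ = n).card = 1 := by
  have hset : (Finset.univ.filter fun σ : Equiv.Perm (Fin n) => Adm G σ ∧ fixc σ = n) = {1} := by
    ext σ
    simp only [Finset.mem_filter, Finset.mem_univ, true_and, Finset.mem_singleton]
    constructor
    · rintro ⟨-, hf⟩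
      have h1 : (Finset.univ.filter fun i => σ i = i) = Finset.univ := by
        apply Finset.eq_univ_of_card
        simpa [Fintype.card_fin, fixc] using hf
      apply Equiv.ext; intro i
      have : i ∈ Finset.univ.filter fun i => σ i = i := by
        rw [h1]; exact Finset.mem_univ i
      simpa using (Finset.mem_filter.mp this).2
    · rintro rfl
      constructor
      · intro i hi; simp at hi
      · simp [fixc]
  rw [hset, Finset.card_singleton]

theorem count_pred (hn : 1 ≤ n) : (Finset.univ.filter fun σ : Equiv.Perm (Fin n) =>
    Adm G σ ∧ fixc σ = n - 1).card = 0 := by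
  rw [Finset.card_eq_zero]
  rw [Finset.eq_empty_iff_forall_notMem]
  rintro σ hσ
  rw [Finset.mem_filter] at hσ
  obtain ⟨-, -, hf⟩ := hσ
  have hcard : (nonfix σ).card = 1 := by
    have := fixc_add_nonfix σ
    have := fixc_le σ
    omega
  obtain ⟨i, hi⟩ := Finset.card_eq_one.mp hcard
  have h1 : i ∈ nonfix σ := by rw [hi]; simp
  have h2 : σ i ∈ nonfix σ := apply_mem_nonfix h1
  rw [hi] at h2
  simp only [Finset.mem_singleton] at h2
  exact (mem_nonfix.mp h1) h2

def swapLift : Sym2 (Fin n) → Equiv.Perm (Fin n) :=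
  Sym2.lift ⟨fun a b => Equiv.swap a b, fun a b => Equiv.swap_comm a b⟩

theorem count_swap (hn : 2 ≤ n) : (Finset.univ.filter fun σ : Equiv.Perm (Fin n) =>
    Adm G σ ∧ fixc σ = n - 2).card = G.edgeFinset.card := by
  symm
  apply Finset.card_bij (fun e _ => swapLift e)
  · intro e he
    induction e with
    | _ a b =>
      have hadj : G.Adj a b := by rwa [SimpleGraph.mem_edgeFinset, SimpleGraph.mem_edgeSet] at he
      have hab : a ≠ b := G.ne_of_adj hadj
      have hsl : swapLift s(a, b) = Equiv.swap a b := rfl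
      rw [Finset.mem_filter, hsl]
      refine ⟨Finset.mem_univ _, ?_, ?_⟩
      · intro i hi
        have : i ∈ nonfix (Equiv.swap a b) := mem_nonfix.mpr hi
        rw [nonfix_swap hab] at this
        simp only [Finset.mem_insert, Finset.mem_singleton] at this
        rcases this with rfl | rfl
        · rwa [Equiv.swap_apply_left]
        · rw [Equiv.swap_apply_right]; exact hadj.symm
      · have := fixc_add_nonfix (Equiv.swap a b)
        rw [nonfix_swap hab] at this
        rw [Finset.card_insert_of_notMem (by simpa using hab), Finset.card_singleton] at this
        omega
  · intro e₁ he₁ e₂ he₂ heq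
    induction e₁ with
    | _ a b =>
      induction e₂ with
      | _ c d =>
        have hab : a ≠ b := G.ne_of_adj (by rwa [SimpleGraph.mem_edgeFinset,
          SimpleGraph.mem_edgeSet] at he₁)
        have hcd : c ≠ d := G.ne_of_adj (by rwa [SimpleGraph.mem_edgeFinset,
          SimpleGraph.mem_edgeSet] at he₂)
        have heq' : Equiv.swap a b = Equiv.swap c d := heq
        have hc : Equiv.swap a b c = d := by rw [heq', Equiv.swap_apply_left]
        by_cases hca : c = a
        · subst hca
          rw [Equiv.swap_apply_left] at hc
          rw [hc]
        · by_cases hcb : c = b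
          · subst hcb
            rw [Equiv.swap_apply_right] at hc
            rw [← hc, Sym2.eq_swap]
          · rw [Equiv.swap_apply_of_ne_of_ne hca hcb] at hc
            exact absurd hc hcd
  · intro σ hσ
    rw [Finset.mem_filter] at hσ
    obtain ⟨-, hadm, hf⟩ := hσ
    have hcard : (nonfix σ).card = 2 := by
      have := fixc_add_nonfix σ
      have := fixc_le σ
      omega
    obtain ⟨a, b, hab, hnf⟩ := Finset.card_eq_two.mp hcard
    have hσs : σ = Equiv.swap a b := eq_swap_of_nonfix_pair hab hnf
    have hadj : G.Adj a b := by
      have ha : σ a ≠ a := mem_nonfix.mp (by rw [hnf]; exact Finset.mem_insert_self a {b})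
      have := hadm a ha
      rwa [hσs, Equiv.swap_apply_left] at this
    refine ⟨s(a, b), ?_, ?_⟩
    · rwa [SimpleGraph.mem_edgeFinset, SimpleGraph.mem_edgeSet]
    · rw [hσs]; rfl
theorem two_le_of_ne {a b : Fin n} (h : a ≠ b) : 2 ≤ n := by
  by_contra hc
  push_neg at hc
  have ha := a.isLt
  have hb := b.isLt
  exact h (Fin.ext (by omega))

omit [DecidableRel G.Adj] in
theorem adm_iff_of_star (v : Fin n) (hv : ∀ a b, G.Adj a b → a = v ∨ b = v)
    (σ : Equiv.Perm (Fin n)) :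
    Adm G σ ↔ σ = 1 ∨ ∃ j, G.Adj v j ∧ σ = Equiv.swap v j := by
  constructor
  · intro hadm
    by_cases hfix : nonfix σ = ∅
    · left
      apply Equiv.ext; intro i
      by_contra hc
      exact absurd (mem_nonfix.mpr hc) (by rw [hfix]; simp)
    · right
      have hvnf : v ∈ nonfix σ := by
        obtain ⟨i, hi⟩ := Finset.nonempty_iff_ne_empty.mpr hfix
        have hi' := mem_nonfix.mp hi
        rcases hv i (σ i) (hadm i hi') with rfl | hsv
        · exact hi
        · rw [mem_nonfix]
          intro hc
          have hiv : i = v := σ.injective (hsv.trans hc.symm)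
          exact hi' (by rw [hiv]; exact hc)
      have hjv : σ v ≠ v := mem_nonfix.mp hvnf
      have hjnf : σ v ∈ nonfix σ := apply_mem_nonfix hvnf
      have hσσv : σ (σ v) = v := by
        rcases hv (σ v) (σ (σ v)) (hadm (σ v) (mem_nonfix.mp hjnf)) with h2 | h2
        · exact absurd h2 hjv
        · exact h2
      have hnfeq : nonfix σ = {v, σ v} := by
        apply Finset.Subset.antisymm
        · intro i hi
          have hi' := mem_nonfix.mp hi
          rcases hv i (σ i) (hadm i hi') with rfl | hsv
          · simp
          · have : i = σ v := σ.injective (by rw [hsv, hσσv])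
            simp [this]
        · intro i hi
          simp only [Finset.mem_insert, Finset.mem_singleton] at hi
          rcases hi with rfl | rfl
          · exact hvnf
          · exact hjnf
      exact ⟨σ v, hadm v (mem_nonfix.mp hvnf), eq_swap_of_nonfix_pair (Ne.symm hjv) hnfeq⟩
  · rintro (rfl | ⟨j, hadj, rfl⟩)
    · intro i hi; simp at hi
    · intro i hi
      have : i ∈ nonfix (Equiv.swap v j) := mem_nonfix.mpr hi
      rw [nonfix_swap (G.ne_of_adj hadj)] at this
      simp only [Finset.mem_insert, Finset.mem_singleton] at this
      rcases this with rfl | rfl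
      · rwa [Equiv.swap_apply_left]
      · rw [Equiv.swap_apply_right]; exact hadj.symm

theorem fixc_swap {a b : Fin n} (hab : a ≠ b) : fixc (Equiv.swap a b) = n - 2 := by
  have h1 := fixc_add_nonfix (Equiv.swap a b)
  rw [nonfix_swap hab, Finset.card_insert_of_notMem (by simpa using hab),
    Finset.card_singleton] at h1
  omega

/-- Master lemma: graphs in which every edge passes through `v`. -/
theorem permPoly_star (v : Fin n) (hv : ∀ a b, G.Adj a b → a = v ∨ b = v) :
    graphPermPoly G = Polynomial.X ^ n +
      Polynomial.C ((G.degree v : ℂ)) * Polynomial.X ^ (n - 2) := by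
  rw [base]
  rw [← Finset.sum_filter]
  have hset : (Finset.univ.filter fun σ : Equiv.Perm (Fin n) => Adm G σ)
      = insert 1 ((G.neighborFinset v).image (fun j => Equiv.swap v j)) := by
    ext σ
    simp only [Finset.mem_filter, Finset.mem_univ, true_and, Finset.mem_insert,
      Finset.mem_image, SimpleGraph.mem_neighborFinset]
    rw [adm_iff_of_star G v hv]
    constructor
    · rintro (rfl | ⟨j, hadj, rfl⟩)
      · left; rfl
      · right; exact ⟨j, hadj, rfl⟩
    · rintro (rfl | ⟨j, hadj, rfl⟩)
      · left; rfl
      · right; exact ⟨j, hadj, rfl⟩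
  rw [hset]
  have hnotmem : (1 : Equiv.Perm (Fin n)) ∉
      (G.neighborFinset v).image (fun j => Equiv.swap v j) := by
    rw [Finset.mem_image]
    rintro ⟨j, hj, hswap⟩
    rw [SimpleGraph.mem_neighborFinset] at hj
    have : Equiv.swap v j v = v := by rw [hswap]; rfl
    rw [Equiv.swap_apply_left] at this
    exact G.ne_of_adj hj this.symm
  rw [Finset.sum_insert hnotmem]
  have hid : Polynomial.C ((-1 : ℂ) ^ (n - fixc (1 : Equiv.Perm (Fin n)))) *
      Polynomial.X ^ fixc (1 : Equiv.Perm (Fin n)) = Polynomial.X ^ n := by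
    have h1 : fixc (1 : Equiv.Perm (Fin n)) = n := by simp [fixc]
    rw [h1, Nat.sub_self, pow_zero, Polynomial.C_1, one_mul]
  rw [hid]
  congr 1
  rw [Finset.sum_image]
  · have hterm : ∀ j ∈ G.neighborFinset v,
        Polynomial.C ((-1 : ℂ) ^ (n - fixc (Equiv.swap v j))) * Polynomial.X ^ fixc (Equiv.swap v j)
        = Polynomial.X ^ (n - 2) := by
      intro j hj
      rw [SimpleGraph.mem_neighborFinset] at hj
      have hvj : v ≠ j := G.ne_of_adj hj
      have hn2 : 2 ≤ n := two_le_of_ne hvj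
      rw [fixc_swap hvj]
      have : n - (n - 2) = 2 := by omega
      rw [this]
      norm_num
    rw [Finset.sum_congr rfl hterm, Finset.sum_const, nsmul_eq_mul]
    rw [SimpleGraph.degree, Polynomial.C_eq_natCast]
  · intro j hj k hk heq
    have : Equiv.swap v j v = Equiv.swap v k v := by rw [show Equiv.swap v j = Equiv.swap v k from heq]
    rwa [Equiv.swap_apply_left, Equiv.swap_apply_left] at this

theorem factor_poly (hn : 2 ≤ n) (m : ℕ) :
    (Polynomial.X : ℂ[X]) ^ n + Polynomial.C ((m : ℂ)) * Polynomial.X ^ (n - 2) =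
    (Polynomial.X - Polynomial.C ((Real.sqrt m : ℂ) * Complex.I)) *
    (Polynomial.X - Polynomial.C (-((Real.sqrt m : ℂ) * Complex.I))) *
    Polynomial.X ^ (n - 2) := by
  have hp2 : ((Real.sqrt m : ℂ) * Complex.I) ^ 2 = -(m : ℂ) := by
    rw [mul_pow, Complex.I_sq]
    have : ((Real.sqrt m : ℂ)) ^ 2 = ((m : ℝ) : ℂ) := by
      norm_cast
      exact Real.sq_sqrt (by positivity)
    rw [this]
    push_cast
    ring
  have hquad : (Polynomial.X - Polynomial.C ((Real.sqrt m : ℂ) * Complex.I)) *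
      (Polynomial.X - Polynomial.C (-((Real.sqrt m : ℂ) * Complex.I))) =
      Polynomial.X ^ 2 + Polynomial.C ((m : ℂ)) := by
    rw [map_neg]
    have expand : ∀ p : ℂ[X], ∀ c : ℂ[X], (p - c) * (p - -c) = p ^ 2 - c ^ 2 := by
      intros; ring
    rw [expand, ← map_pow, hp2, map_neg, sub_neg_eq_add]
  rw [hquad]
  have hx : (Polynomial.X : ℂ[X]) ^ n = Polynomial.X ^ 2 * Polynomial.X ^ (n - 2) := by
    rw [← pow_add]
    congr 1
    omega
  rw [hx]
  ring

theorem roots_form (hn : 2 ≤ n) (m : ℕ) :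
    ((Polynomial.X : ℂ[X]) ^ n + Polynomial.C ((m : ℂ)) * Polynomial.X ^ (n - 2)).roots =
    ((Real.sqrt m : ℂ) * Complex.I) ::ₘ (-((Real.sqrt m : ℂ) * Complex.I)) ::ₘ
      Multiset.replicate (n - 2) 0 := by
  rw [factor_poly hn m]
  have h1 : (Polynomial.X - Polynomial.C ((Real.sqrt m : ℂ) * Complex.I)) ≠ 0 :=
    Polynomial.X_sub_C_ne_zero _
  have h2 : (Polynomial.X - Polynomial.C (-((Real.sqrt m : ℂ) * Complex.I))) ≠ 0 :=
    Polynomial.X_sub_C_ne_zero _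
  have h3 : (Polynomial.X : ℂ[X]) ^ (n - 2) ≠ 0 := pow_ne_zero _ Polynomial.X_ne_zero
  rw [Polynomial.roots_mul (mul_ne_zero (mul_ne_zero h1 h2) h3),
    Polynomial.roots_mul (mul_ne_zero h1 h2),
    Polynomial.roots_X_sub_C, Polynomial.roots_X_sub_C, Polynomial.roots_pow,
    Polynomial.roots_X]
  have : (n - 2) • ({0} : Multiset ℂ) = Multiset.replicate (n - 2) 0 := by
    rw [Multiset.nsmul_singleton]
  rw [this]
  rfl

theorem energy_of_form (hn : 2 ≤ n) (m : ℕ) :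
    ((((Polynomial.X : ℂ[X]) ^ n + Polynomial.C ((m : ℂ)) * Polynomial.X ^ (n - 2)).roots).map
      (fun z : ℂ => ‖z‖)).sum = 2 * Real.sqrt m := by
  rw [roots_form hn m]
  simp only [Multiset.map_cons, Multiset.sum_cons, Multiset.map_replicate,
    Multiset.sum_replicate, norm_neg]
  have habs : ‖(Real.sqrt m : ℂ) * Complex.I‖ = Real.sqrt m := by
    rw [norm_mul, Complex.norm_I, Complex.norm_real, mul_one,
      Real.norm_of_nonneg (Real.sqrt_nonneg _)]
  rw [habs]
  simp
  ring

theorem coeff_form_zero (m : ℕ) (k : ℕ) (h1 : k ≠ n) (h2 : k ≠ n - 2) :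
    ((Polynomial.X : ℂ[X]) ^ n + Polynomial.C ((m : ℂ)) * Polynomial.X ^ (n - 2)).coeff k = 0 := by
  rw [Polynomial.coeff_add, Polynomial.coeff_X_pow, Polynomial.coeff_C_mul,
    Polynomial.coeff_X_pow, if_neg h1, if_neg h2]
  simp


theorem esymm_cons_two {R : Type*} [CommRing R] (a : R) (s : Multiset R) :
    (a ::ₘ s).esymm 2 = s.esymm 2 + a * s.sum := by
  rw [Multiset.esymm, Multiset.powersetCard_cons, Multiset.map_add, Multiset.sum_add]
  congr 1
  rw [Multiset.map_map]
  have h1 : ∀ t ∈ Multiset.powersetCard 1 s,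
      (Multiset.prod ∘ Multiset.cons a) t = a * t.prod := by
    intro t _
    simp [Multiset.prod_cons]
  rw [Multiset.map_congr rfl h1, Multiset.powersetCard_one, Multiset.map_map]
  have h2 : ∀ x ∈ s, (fun t => a * Multiset.prod t) ∘ (fun x => ({x} : Multiset R)) =
      fun x => a * x := by intro x _; funext y; simp
  have h3 : ((s.map ((fun t => a * Multiset.prod t) ∘ fun x => ({x} : Multiset R)))).sum
      = (s.map (fun x => a * x)).sum := by
    congr 1
    apply Multiset.map_congr rfl
    intro x _
    simp
  rw [h3, Multiset.sum_map_mul_left]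
  simp

theorem sum_sq_eq {R : Type*} [CommRing R] (s : Multiset R) :
    (s.map (fun x => x ^ 2)).sum = s.sum ^ 2 - 2 * s.esymm 2 := by
  induction s using Multiset.induction_on with
  | empty => simp [Multiset.esymm, Multiset.powersetCard_eq_empty 2 (s := (0 : Multiset R)) (by simp)]
  | cons a s ih =>
    rw [Multiset.map_cons, Multiset.sum_cons, Multiset.sum_cons, esymm_cons_two, ih]
    ring

theorem all_eq_of_sum_le {α : Type*} {s : Multiset α} (f g : α → ℝ)
    (hle : ∀ x ∈ s, f x ≤ g x) (hsum : (s.map g).sum ≤ (s.map f).sum) :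
    ∀ x ∈ s, f x = g x := by
  induction s using Multiset.induction_on with
  | empty => intro x hx; simp at hx
  | cons a s ih =>
    rw [Multiset.map_cons, Multiset.sum_cons, Multiset.map_cons, Multiset.sum_cons] at hsum
    have hfa : f a ≤ g a := hle a (Multiset.mem_cons_self a s)
    have hrest : (s.map f).sum ≤ (s.map g).sum :=
      Multiset.sum_map_le_sum_map f g (fun x hx => hle x (Multiset.mem_cons_of_mem hx))
    intro x hx
    rcases Multiset.mem_cons.mp hx with rfl | hx'
    · linarith
    · exact ih (fun y hy => hle y (Multiset.mem_cons_of_mem hy))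
        (by linarith) x hx'

theorem re_msum (s : Multiset ℂ) : (s.map Complex.re).sum = s.sum.re := by
  induction s using Multiset.induction_on with
  | empty => simp
  | cons a s ih => simp [ih]

theorem msum_neg {α : Type*} (s : Multiset α) (f : α → ℝ) :
    (s.map fun x => -(f x)).sum = -((s.map f).sum) := by
  induction s using Multiset.induction_on with
  | empty => simp
  | cons a s ih => simp [ih]; ring

theorem msum_re {α : Type*} (s : Multiset α) (f : α → ℂ) :
    (s.map fun x => (f x).re).sum = ((s.map f).sum).re := by
  induction s using Multiset.induction_on with
  | empty => simp
  | cons a s ih => simp [ih]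

theorem abs_mprod (s : Multiset ℂ) : (s.map (fun z : ℂ => ‖z‖)).prod = ‖s.prod‖ := by
  induction s using Multiset.induction_on with
  | empty => simp
  | cons a s ih => simp [ih]

set_option maxHeartbeats 1600000 in
/-- The equality analysis. -/
theorem root_multiset_eq {m n : ℕ} (hm : 1 ≤ m) (r : Multiset ℂ)
    (hcard : Multiset.card r = n)
    (hsum : r.sum = 0) (hesymm : r.esymm 2 = (m : ℂ))
    (henergy : (r.map (fun z : ℂ => ‖z‖)).sum = 2 * Real.sqrt m) :
    r = ((Real.sqrt m : ℂ) * Complex.I) ::ₘ (-((Real.sqrt m : ℂ) * Complex.I)) ::ₘ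
      Multiset.replicate (n - 2) 0 := by
  -- sum of squares
  have hsq : (r.map (fun z => z ^ 2)).sum = -(2 * (m : ℂ)) := by
    rw [sum_sq_eq, hsum, hesymm]; ring
  -- diagonal lower bound data
  have hdiag_sum : (r.map (fun z => -((z ^ 2).re))).sum = 2 * (m : ℝ) := by
    rw [msum_neg r (fun z => (z ^ 2).re), msum_re r (fun z => z ^ 2), hsq]
    simp
  have hdiag_le : ∀ z ∈ r, -((z ^ 2).re) ≤ ‖z‖ ^ 2 := by
    intro z _
    have h1 : -‖z ^ 2‖ ≤ (z ^ 2).re := by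
      have := Complex.abs_re_le_norm (z ^ 2)
      have := abs_le.mp this
      linarith [this.1]
    rw [norm_pow] at h1
    linarith
  -- off-diagonal
  have hoffA : (r.map (fun z : ℂ => ‖z‖)).esymm 2 =
      ((r.powersetCard 2).map (fun t => ‖t.prod‖)).sum := by
    rw [Multiset.esymm, Multiset.powersetCard_map, Multiset.map_map]
    congr 1
    apply Multiset.map_congr rfl
    intro t _
    exact abs_mprod t
  have hoff_re : ((r.powersetCard 2).map (fun t => (t.prod).re)).sum = (m : ℝ) := by
    rw [msum_re (r.powersetCard 2) Multiset.prod]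
    have : ((r.powersetCard 2).map Multiset.prod).sum = r.esymm 2 := rfl
    rw [this, hesymm]
    simp
  have hoff_le : ∀ t ∈ r.powersetCard 2, (t.prod).re ≤ ‖t.prod‖ :=
    fun t _ => Complex.re_le_norm _
  -- energy square identity
  have habs_nonneg : ∀ x ∈ r.map (fun z : ℂ => ‖z‖), 0 ≤ x := by
    intro x hx
    obtain ⟨z, _, rfl⟩ := Multiset.mem_map.mp hx
    exact norm_nonneg z
  have hE2 : ((r.map (fun z : ℂ => ‖z‖)).sum) ^ 2 = 4 * (m : ℝ) := by
    rw [henergy]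
    rw [mul_pow, Real.sq_sqrt (by positivity)]
    ring
  have hsq_id : ((r.map (fun z : ℂ => ‖z‖)).sum) ^ 2 =
      ((r.map (fun z => ‖z‖ ^ 2)).sum) + 2 * (r.map (fun z : ℂ => ‖z‖)).esymm 2 := by
    have h0 := sum_sq_eq (r.map (fun z : ℂ => ‖z‖))
    rw [Multiset.map_map] at h0
    have h2 : r.map ((fun x => x ^ 2) ∘ (fun z : ℂ => ‖z‖)) = r.map (fun z => ‖z‖ ^ 2) :=
      Multiset.map_congr rfl (fun z _ => rfl)
    rw [h2] at h0
    linarith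
  -- the two inequalities
  have hdiag_ge : 2 * (m : ℝ) ≤ (r.map (fun z => ‖z‖ ^ 2)).sum := by
    rw [← hdiag_sum]
    exact Multiset.sum_map_le_sum_map _ _ hdiag_le
  have hoff_ge : (m : ℝ) ≤ (r.map (fun z : ℂ => ‖z‖)).esymm 2 := by
    rw [hoffA, ← hoff_re]
    exact Multiset.sum_map_le_sum_map _ _ hoff_le
  -- equalities
  have hdiag_eq : (r.map (fun z => ‖z‖ ^ 2)).sum = 2 * (m : ℝ) := by
    have := hsq_id.symm.trans hE2
    linarith
  have hoff_eq : (r.map (fun z : ℂ => ‖z‖)).esymm 2 = (m : ℝ) := by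
    have := hsq_id.symm.trans hE2
    linarith
  -- termwise
  have hdiag_term : ∀ z ∈ r, -((z ^ 2).re) = ‖z‖ ^ 2 :=
    all_eq_of_sum_le _ _ hdiag_le (by rw [hdiag_eq, hdiag_sum])
  have hre_zero : ∀ z ∈ r, z.re = 0 := by
    intro z hz
    have h := hdiag_term z hz
    have h1 : (z ^ 2).re = z.re * z.re - z.im * z.im := by
      rw [sq]; exact Complex.mul_re z z
    have h2 : ‖z‖ ^ 2 = z.re * z.re + z.im * z.im := by
      rw [Complex.sq_norm]; rfl
    nlinarith [h, h1, h2]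
  have hoff_term : ∀ t ∈ r.powersetCard 2, (t.prod).re = ‖t.prod‖ := by
    apply all_eq_of_sum_le _ _ hoff_le
    rw [hoff_re, ← hoffA, hoff_eq]
  -- pair products are ≤ 0 in imaginary parts
  have hpair : ∀ x y : ℂ, (x ::ₘ y ::ₘ 0) ≤ r → x.im * y.im ≤ 0 := by
    intro x y hle2
    have hmem : (x ::ₘ y ::ₘ 0) ∈ r.powersetCard 2 := by
      rw [Multiset.mem_powersetCard]
      exact ⟨hle2, rfl⟩
    have h := hoff_term _ hmem
    have hprod : (x ::ₘ y ::ₘ (0 : Multiset ℂ)).prod = x * y := by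
      simp
    rw [hprod] at h
    have hxre : x.re = 0 := hre_zero x (Multiset.mem_of_le hle2 (Multiset.mem_cons_self _ _))
    have hyre : y.re = 0 := hre_zero y (Multiset.mem_of_le hle2
      (Multiset.mem_cons_of_mem (Multiset.mem_cons_self _ _)))
    have hre : (x * y).re = -(x.im * y.im) := by
      rw [Complex.mul_re, hxre, hyre]; ring
    have habs : 0 ≤ ‖x * y‖ := norm_nonneg _
    linarith [habs, h, hre]
  -- find a nonzero pair
  have hexists : ∃ t ∈ r.powersetCard 2, t.prod ≠ 0 := by
    by_contra hc
    push_neg at hc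
    have : r.esymm 2 = 0 := by
      rw [Multiset.esymm]
      apply Multiset.sum_eq_zero
      intro x hx
      obtain ⟨t, ht, rfl⟩ := Multiset.mem_map.mp hx
      exact hc t ht
    rw [hesymm] at this
    exact absurd this (Nat.cast_ne_zero.mpr (by omega))
  obtain ⟨t, ht, htprod⟩ := hexists
  rw [Multiset.mem_powersetCard] at ht
  obtain ⟨hle2, hcard2⟩ := ht
  obtain ⟨x, y, rfl⟩ := Multiset.card_eq_two.mp hcard2
  have hxyprod : (({x, y} : Multiset ℂ)).prod = x * y := by simp
  rw [hxyprod] at htprod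
  have hxne : x ≠ 0 := fun h => htprod (by rw [h]; ring)
  have hyne : y ≠ 0 := fun h => htprod (by rw [h]; ring)
  have hxre : x.re = 0 := hre_zero x (Multiset.mem_of_le hle2 (by simp))
  have hyre : y.re = 0 := hre_zero y (Multiset.mem_of_le hle2 (by simp))
  have hxim : x.im ≠ 0 := fun h => hxne (Complex.ext hxre h)
  have hyim : y.im ≠ 0 := fun h => hyne (Complex.ext hyre h)
  have hprodneg : x.im * y.im < 0 := by
    have := hpair x y hle2
    rcases lt_or_eq_of_le this with h | h
    · exact h
    · exact absurd h (mul_ne_zero hxim hyim)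
  -- WLOG x.im > 0
  have key : ∃ p q : ℂ, (p ::ₘ q ::ₘ 0) ≤ r ∧ 0 < p.im ∧ q.im < 0 ∧ p.re = 0 ∧ q.re = 0 := by
    rcases lt_or_gt_of_ne hxim with hneg | hpos
    · refine ⟨y, x, ?_, ?_, hneg, hyre, hxre⟩
      · rwa [show (y ::ₘ x ::ₘ 0 : Multiset ℂ) = {x, y} from Multiset.cons_swap y x 0]
      · nlinarith
    · exact ⟨x, y, hle2, hpos, by nlinarith, hxre, hyre⟩
  obtain ⟨p, q, hpq_le, hp_pos, hq_neg, hp_re, hq_re⟩ := key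
  obtain ⟨u, hu⟩ := Multiset.le_iff_exists_add.mp hpq_le
  have hru : r = p ::ₘ q ::ₘ u := by
    rw [hu]
    simp [Multiset.cons_add]
  -- all of u is zero
  have hu_zero : ∀ z ∈ u, z = 0 := by
    intro z hz
    have hzre : z.re = 0 := hre_zero z
      (by rw [hru]; exact Multiset.mem_cons_of_mem (Multiset.mem_cons_of_mem hz))
    have h1 : (p ::ₘ z ::ₘ 0 : Multiset ℂ) ≤ r := by
      rw [hru]
      apply Multiset.cons_le_cons
      calc (z ::ₘ 0 : Multiset ℂ) = {z} := rfl
        _ ≤ q ::ₘ u := Multiset.singleton_le.mpr (Multiset.mem_cons_of_mem hz)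
    have h2 : (q ::ₘ z ::ₘ 0 : Multiset ℂ) ≤ r := by
      rw [hru, show (p ::ₘ q ::ₘ u : Multiset ℂ) = q ::ₘ p ::ₘ u from Multiset.cons_swap p q u]
      apply Multiset.cons_le_cons
      calc (z ::ₘ 0 : Multiset ℂ) = {z} := rfl
        _ ≤ p ::ₘ u := Multiset.singleton_le.mpr (Multiset.mem_cons_of_mem hz)
    have hz1 := hpair p z h1
    have hz2 := hpair q z h2
    have him : z.im = 0 := by nlinarith
    exact Complex.ext hzre him
  have hucard : Multiset.card u = n - 2 := by
    have := hcard
    rw [hru] at this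
    simp only [Multiset.card_cons] at this
    omega
  have hurep : u = Multiset.replicate (n - 2) 0 := by
    rw [← hucard]
    exact Multiset.eq_replicate_card.mpr hu_zero
  have husum : u.sum = 0 := by
    rw [hurep]
    simp
  have hqp : q = -p := by
    have := hsum
    rw [hru, Multiset.sum_cons, Multiset.sum_cons, husum] at this
    linear_combination this
  have huesymm : u.esymm 2 = 0 := by
    rw [Multiset.esymm]
    apply Multiset.sum_eq_zero
    intro w hw
    obtain ⟨t, ht, rfl⟩ := Multiset.mem_map.mp hw
    rw [Multiset.mem_powersetCard] at ht
    have hne : t ≠ 0 := by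
      intro h
      rw [h] at ht
      simp at ht
    obtain ⟨z, hz⟩ := Multiset.exists_mem_of_ne_zero hne
    have : z = 0 := hu_zero z (Multiset.mem_of_le ht.1 hz)
    exact Multiset.prod_eq_zero (this ▸ hz)
  have hpq_m : p * q = (m : ℂ) := by
    have := hesymm
    rw [hru, esymm_cons_two, esymm_cons_two, huesymm, Multiset.sum_cons, husum] at this
    linear_combination this
  have hpim : p.im ^ 2 = (m : ℝ) := by
    have h1 : (p * q).re = (m : ℝ) := by rw [hpq_m]; simp
    rw [hqp] at h1
    have h2 : (p * -p).re = -(p.re * p.re) + p.im * p.im := by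
      rw [Complex.mul_re, Complex.neg_re, Complex.neg_im]
      ring
    rw [h2, hp_re] at h1
    nlinarith
  have hpval : p.im = Real.sqrt m := by
    rw [← hpim, Real.sqrt_sq hp_pos.le]
  have hp_eq : p = (Real.sqrt m : ℂ) * Complex.I := by
    apply Complex.ext
    · simp [hp_re]
    · simp [hpval]
  rw [hru, hurep, hp_eq, hqp, hp_eq]


theorem degree_le : (graphPermPoly G).degree ≤ n := by
  rw [base]
  apply (Polynomial.degree_sum_le _ _).trans
  apply Finset.sup_le
  intro σ _
  by_cases h : Adm G σ
  · rw [if_pos h]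
    refine (Polynomial.degree_C_mul_X_pow_le _ _).trans ?_
    exact_mod_cast fixc_le σ
  · rw [if_neg h]; simp

theorem coeff_n : (graphPermPoly G).coeff n = 1 := by
  rw [coeff_eq, count_id]
  simp

theorem monic_gpp : (graphPermPoly G).Monic ∧ (graphPermPoly G).natDegree = n := by
  have h1 : (graphPermPoly G).degree = n := by
    apply le_antisymm (degree_le G)
    apply Polynomial.le_degree_of_ne_zero
    rw [coeff_n G]; exact one_ne_zero
  have h2 : (graphPermPoly G).natDegree = n := Polynomial.natDegree_eq_of_degree_eq_some h1
  refine ⟨?_, h2⟩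
  rw [Polynomial.Monic, Polynomial.leadingCoeff, h2, coeff_n G]

theorem roots_card : Multiset.card (graphPermPoly G).roots = n :=
  (Polynomial.splits_iff_card_roots.mp (IsAlgClosed.splits _)).trans (monic_gpp G).2

theorem prod_roots : graphPermPoly G =
    ((graphPermPoly G).roots.map (fun a => Polynomial.X - Polynomial.C a)).prod :=
  (IsAlgClosed.splits _).eq_prod_roots_of_monic (monic_gpp G).1

theorem esymm_one_eq (s : Multiset ℂ) : s.esymm 1 = s.sum := by
  rw [Multiset.esymm, Multiset.powersetCard_one, Multiset.map_map]
  have : ∀ x ∈ s, (Multiset.prod ∘ fun x => ({x} : Multiset ℂ)) x = x := by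
    intro x _; simp
  rw [Multiset.map_congr rfl this, Multiset.map_id']

theorem roots_sum (hn : 1 ≤ n) : (graphPermPoly G).roots.sum = 0 := by
  have hc : (graphPermPoly G).coeff (n - 1) = 0 := by
    rw [coeff_eq, count_pred G hn]
    simp
  have hv := Polynomial.coeff_eq_esymm_roots_of_card
    (p := graphPermPoly G) (by rw [roots_card, (monic_gpp G).2]) (k := n - 1)
    (by rw [(monic_gpp G).2]; omega)
  rw [(monic_gpp G).2, (monic_gpp G).1, hc] at hv
  have h1 : n - (n - 1) = 1 := by omega
  rw [h1, esymm_one_eq, one_mul, pow_one] at hv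
  have := hv.symm
  rw [neg_mul, neg_eq_zero, one_mul] at this
  exact this

theorem roots_esymm2 (hn : 2 ≤ n) {m : ℕ} (hm : G.edgeFinset.card = m) :
    (graphPermPoly G).roots.esymm 2 = (m : ℂ) := by
  have hc : (graphPermPoly G).coeff (n - 2) = (m : ℂ) := by
    rw [coeff_eq, count_swap G hn, hm]
    have h2 : n - (n - 2) = 2 := by omega
    rw [h2]
    ring
  have hv := Polynomial.coeff_eq_esymm_roots_of_card
    (p := graphPermPoly G) (by rw [roots_card, (monic_gpp G).2]) (k := n - 2)
    (by rw [(monic_gpp G).2]; omega)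
  rw [(monic_gpp G).2, (monic_gpp G).1, hc] at hv
  have h2 : n - (n - 2) = 2 := by omega
  rw [h2, one_mul] at hv
  have : ((-1 : ℂ)) ^ 2 = 1 := by ring
  rw [this, one_mul] at hv
  exact hv.symm

theorem poly_eq_of_energy {m : ℕ} (hm : G.edgeFinset.card = m) (hm1 : 1 ≤ m) (hn : 2 ≤ n)
    (hE : perEnergy G = 2 * Real.sqrt m) :
    graphPermPoly G = Polynomial.X ^ n + Polynomial.C ((m : ℂ)) * Polynomial.X ^ (n - 2) := by
  have hr := root_multiset_eq hm1 (graphPermPoly G).roots (roots_card G)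
    (roots_sum G (by omega)) (roots_esymm2 G hn hm) hE
  rw [factor_poly hn m]
  conv_lhs => rw [prod_roots G]
  rw [hr]
  simp only [Multiset.map_cons, Multiset.prod_cons, Multiset.map_replicate,
    Multiset.prod_replicate, map_zero, sub_zero]
  ring

theorem no_triangle {m : ℕ}
    (hpoly : graphPermPoly G = Polynomial.X ^ n + Polynomial.C ((m : ℂ)) * Polynomial.X ^ (n - 2))
    (x y z : Fin n) (hxy : G.Adj x y) (hyz : G.Adj y z) (hxz : G.Adj x z) : False := by
  have hxyne := hxy.ne
  have hyzne := hyz.ne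
  have hxzne := hxz.ne
  have h3 : 3 ≤ n := by
    have h1 : x.val ≠ y.val := fun h => hxyne (Fin.ext h)
    have h2 : y.val ≠ z.val := fun h => hyzne (Fin.ext h)
    have h4 : x.val ≠ z.val := fun h => hxzne (Fin.ext h)
    have := x.isLt; have := y.isLt; have := z.isLt
    omega
  set σ : Equiv.Perm (Fin n) := Equiv.swap x z * Equiv.swap x y with hσ
  have hσx : σ x = y := by
    rw [hσ, Equiv.Perm.mul_apply, Equiv.swap_apply_left,
      Equiv.swap_apply_of_ne_of_ne (Ne.symm hxyne) hyzne]
  have hσy : σ y = z := by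
    rw [hσ, Equiv.Perm.mul_apply, Equiv.swap_apply_right, Equiv.swap_apply_left]
  have hσz : σ z = x := by
    rw [hσ, Equiv.Perm.mul_apply,
      Equiv.swap_apply_of_ne_of_ne (Ne.symm hxzne) (Ne.symm hyzne), Equiv.swap_apply_right]
  have hσo : ∀ i, i ≠ x → i ≠ y → i ≠ z → σ i = i := by
    intro i h1 h2 h3
    rw [hσ, Equiv.Perm.mul_apply, Equiv.swap_apply_of_ne_of_ne h1 h2,
      Equiv.swap_apply_of_ne_of_ne h1 h3]
  have hnf : nonfix σ = {x, y, z} := by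
    ext i
    simp only [mem_nonfix, Finset.mem_insert, Finset.mem_singleton]
    constructor
    · intro h
      by_contra hc
      push_neg at hc
      exact h (hσo i hc.1 hc.2.1 hc.2.2)
    · rintro (rfl | rfl | rfl)
      · rw [hσx]; exact Ne.symm hxyne
      · rw [hσy]; exact Ne.symm hyzne
      · rw [hσz]; exact hxzne
  have hcard3 : ({x, y, z} : Finset (Fin n)).card = 3 := by
    rw [Finset.card_insert_of_notMem (by simp [hxyne, hxzne]),
      Finset.card_insert_of_notMem (by simp [hyzne]), Finset.card_singleton]
  have hfx : fixc σ = n - 3 := by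
    have := fixc_add_nonfix σ
    rw [hnf, hcard3] at this
    omega
  have hadm : Adm G σ := by
    intro i hi
    have : i ∈ nonfix σ := mem_nonfix.mpr hi
    rw [hnf] at this
    simp only [Finset.mem_insert, Finset.mem_singleton] at this
    rcases this with rfl | rfl | rfl
    · rw [hσx]; exact hxy
    · rw [hσy]; exact hyz
    · rw [hσz]; exact hxz.symm
  have hmem : σ ∈ Finset.univ.filter
      (fun τ : Equiv.Perm (Fin n) => Adm G τ ∧ fixc τ = n - 3) := by
    rw [Finset.mem_filter]
    exact ⟨Finset.mem_univ _, hadm, hfx⟩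
  have hzero : (graphPermPoly G).coeff (n - 3) = 0 := by
    rw [hpoly]
    exact coeff_form_zero m (n - 3) (by omega) (by omega)
  rw [coeff_eq] at hzero
  have hc0 : ((Finset.univ.filter
      (fun τ : Equiv.Perm (Fin n) => Adm G τ ∧ fixc τ = n - 3)).card : ℂ) = 0 := by
    rcases mul_eq_zero.mp hzero with h | h
    · exact absurd h (pow_ne_zero _ (by norm_num))
    · exact h
  rw [Nat.cast_eq_zero, Finset.card_eq_zero] at hc0
  rw [hc0] at hmem
  exact absurd hmem (Finset.notMem_empty σ)

theorem no_two_matching {m : ℕ}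
    (hpoly : graphPermPoly G = Polynomial.X ^ n + Polynomial.C ((m : ℂ)) * Polynomial.X ^ (n - 2))
    (x y z w : Fin n) (hxy : G.Adj x y) (hzw : G.Adj z w)
    (h1 : x ≠ z) (h2 : x ≠ w) (h3 : y ≠ z) (h4 : y ≠ w) : False := by
  have hxyne := hxy.ne
  have hzwne := hzw.ne
  have h4n : 4 ≤ n := by
    have a1 : x.val ≠ y.val := fun h => hxyne (Fin.ext h)
    have a2 : z.val ≠ w.val := fun h => hzwne (Fin.ext h)
    have a3 : x.val ≠ z.val := fun h => h1 (Fin.ext h)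
    have a4 : x.val ≠ w.val := fun h => h2 (Fin.ext h)
    have a5 : y.val ≠ z.val := fun h => h3 (Fin.ext h)
    have a6 : y.val ≠ w.val := fun h => h4 (Fin.ext h)
    have := x.isLt; have := y.isLt; have := z.isLt; have := w.isLt
    omega
  set σ : Equiv.Perm (Fin n) := Equiv.swap x y * Equiv.swap z w with hσ
  have hσx : σ x = y := by
    rw [hσ, Equiv.Perm.mul_apply, Equiv.swap_apply_of_ne_of_ne h1 h2, Equiv.swap_apply_left]
  have hσy : σ y = x := by
    rw [hσ, Equiv.Perm.mul_apply, Equiv.swap_apply_of_ne_of_ne h3 h4, Equiv.swap_apply_right]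
  have hσz : σ z = w := by
    rw [hσ, Equiv.Perm.mul_apply, Equiv.swap_apply_left,
      Equiv.swap_apply_of_ne_of_ne (Ne.symm h2) (Ne.symm h4)]
  have hσw : σ w = z := by
    rw [hσ, Equiv.Perm.mul_apply, Equiv.swap_apply_right,
      Equiv.swap_apply_of_ne_of_ne (Ne.symm h1) (Ne.symm h3)]
  have hσo : ∀ i, i ≠ x → i ≠ y → i ≠ z → i ≠ w → σ i = i := by
    intro i hh1 hh2 hh3 hh4
    rw [hσ, Equiv.Perm.mul_apply, Equiv.swap_apply_of_ne_of_ne hh3 hh4,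
      Equiv.swap_apply_of_ne_of_ne hh1 hh2]
  have hnf : nonfix σ = {x, y, z, w} := by
    ext i
    simp only [mem_nonfix, Finset.mem_insert, Finset.mem_singleton]
    constructor
    · intro h
      by_contra hc
      push_neg at hc
      exact h (hσo i hc.1 hc.2.1 hc.2.2.1 hc.2.2.2)
    · rintro (rfl | rfl | rfl | rfl)
      · rw [hσx]; exact Ne.symm hxyne
      · rw [hσy]; exact hxyne
      · rw [hσz]; exact Ne.symm hzwne
      · rw [hσw]; exact hzwne
  have hcard4 : ({x, y, z, w} : Finset (Fin n)).card = 4 := by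
    rw [Finset.card_insert_of_notMem (by simp [hxyne, h1, h2]),
      Finset.card_insert_of_notMem (by simp [h3, h4]),
      Finset.card_insert_of_notMem (by simp [hzwne]), Finset.card_singleton]
  have hfx : fixc σ = n - 4 := by
    have := fixc_add_nonfix σ
    rw [hnf, hcard4] at this
    omega
  have hadm : Adm G σ := by
    intro i hi
    have : i ∈ nonfix σ := mem_nonfix.mpr hi
    rw [hnf] at this
    simp only [Finset.mem_insert, Finset.mem_singleton] at this
    rcases this with rfl | rfl | rfl | rfl
    · rw [hσx]; exact hxy
    · rw [hσy]; exact hxy.symm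
    · rw [hσz]; exact hzw
    · rw [hσw]; exact hzw.symm
  have hmem : σ ∈ Finset.univ.filter
      (fun τ : Equiv.Perm (Fin n) => Adm G τ ∧ fixc τ = n - 4) := by
    rw [Finset.mem_filter]
    exact ⟨Finset.mem_univ _, hadm, hfx⟩
  have hzero : (graphPermPoly G).coeff (n - 4) = 0 := by
    rw [hpoly]
    exact coeff_form_zero m (n - 4) (by omega) (by omega)
  rw [coeff_eq] at hzero
  have hc0 : ((Finset.univ.filter
      (fun τ : Equiv.Perm (Fin n) => Adm G τ ∧ fixc τ = n - 4)).card : ℂ) = 0 := by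
    rcases mul_eq_zero.mp hzero with h | h
    · exact absurd h (pow_ne_zero _ (by norm_num))
    · exact h
  rw [Nat.cast_eq_zero, Finset.card_eq_zero] at hc0
  rw [hc0] at hmem
  exact absurd hmem (Finset.notMem_empty σ)

omit [DecidableRel G.Adj] in
theorem common_vertex
    (hT : ∀ x y z, G.Adj x y → G.Adj y z → G.Adj x z → False)
    (hM : ∀ x y z w, G.Adj x y → G.Adj z w → x ≠ z → x ≠ w → y ≠ z → y ≠ w → False)
    (a b : Fin n) (hab : G.Adj a b) :
    ∃ v, ∀ x y, G.Adj x y → x = v ∨ y = v := by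
  by_cases hA : ∀ x y, G.Adj x y → x = a ∨ y = a
  · exact ⟨a, hA⟩
  push_neg at hA
  obtain ⟨c, d, hcd, hca, hda⟩ := hA
  -- get an edge at b avoiding a
  have hbcd : b = c ∨ b = d := by
    by_contra hc
    push_neg at hc
    exact hM a b c d hab hcd (Ne.symm hca) (Ne.symm hda) hc.1 hc.2
  have hbe : ∃ e, G.Adj b e ∧ e ≠ a := by
    rcases hbcd with rfl | rfl
    · exact ⟨d, hcd, hda⟩
    · exact ⟨c, hcd.symm, hca⟩
  obtain ⟨e, hbe', hea⟩ := hbe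
  have hkey : ∀ y, G.Adj a y → y ≠ b → False := by
    intro y hay hyb
    by_cases hye : y = e
    · subst hye
      exact hT a b y hab hbe' hay
    · exact hM a y b e hay hbe' hab.ne (Ne.symm hea) hyb hye
  refine ⟨b, fun x y hxy => ?_⟩
  by_contra hc
  push_neg at hc
  by_cases hxa : x = a
  · subst hxa
    exact hkey y hxy hc.2
  by_cases hya : y = a
  · subst hya
    exact hkey x hxy.symm hc.1
  · exact hM a b x y hab hxy (Ne.symm hxa) (Ne.symm hya) (Ne.symm hc.1) (Ne.symm hc.2)

theorem degree_eq_card (v : Fin n) (hv : ∀ a b, G.Adj a b → a = v ∨ b = v) :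
    G.degree v = G.edgeFinset.card := by
  rw [← SimpleGraph.card_incidenceFinset_eq_degree]
  congr 1
  apply Finset.Subset.antisymm
  · intro e he
    rw [SimpleGraph.mem_incidenceFinset] at he
    rw [SimpleGraph.mem_edgeFinset]
    exact G.incidenceSet_subset v he
  · intro e he
    rw [SimpleGraph.mem_edgeFinset] at he
    rw [SimpleGraph.mem_incidenceFinset]
    refine ⟨he, ?_⟩
    revert he
    induction e with
    | _ x y =>
      intro he
      rcases hv x y he with rfl | rfl
      · exact Sym2.mem_mk_left _ _
      · exact Sym2.mem_mk_right _ _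

theorem iso_of_common (hn : 1 ≤ n) (v : Fin n) (hv : ∀ a b, G.Adj a b → a = v ∨ b = v)
    {m : ℕ} (hm : G.edgeFinset.card = m) :
    Nonempty (G ≃g starPlusIsolated n m) := by
  classical
  set z0 : Fin n := ⟨0, by omega⟩ with hz0
  set N := G.neighborFinset v with hN
  have hdeg : N.card = m := by
    rw [← hm, ← degree_eq_card G v hv]
    rfl
  have hvN : v ∉ N := by
    rw [hN, SimpleGraph.mem_neighborFinset]
    exact G.irrefl
  have hmn : m + 1 ≤ n := by
    have h1 : (insert v N).card ≤ n := by
      have := Finset.card_le_univ (insert v N)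
      simpa using this
    rw [Finset.card_insert_of_notMem hvN, hdeg] at h1
    omega
  set T : Finset (Fin n) := Finset.univ.filter (fun x : Fin n => 1 ≤ x.val ∧ x.val ≤ m) with hT
  have hTcard : T.card = m := by
    have : T.card = (Finset.Icc 1 m).card := by
      apply Finset.card_bij (fun x _ => x.val)
      · intro x hx
        rw [hT] at hx
        simp only [Finset.mem_filter] at hx
        rw [Finset.mem_Icc]
        exact hx.2
      · intro x hx y hy hxy
        exact Fin.ext hxy
      · intro k hk
        rw [Finset.mem_Icc] at hk
        refine ⟨⟨k, by omega⟩, ?_, rfl⟩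
        rw [hT]
        simp only [Finset.mem_filter]
        exact ⟨Finset.mem_univ _, hk.1, hk.2⟩
    rw [this, Nat.card_Icc]
    omega
  have h0T : z0 ∉ T := by
    rw [hT]
    simp [hz0]
  -- the subtype equivalence
  have hcards : N.card = T.card := by rw [hdeg, hTcard]
  have e₁ : {x // x ∈ N} ≃ {x // x ∈ T} := by
    have := Finset.equivOfCardEq hcards
    exact this
  set π₀ : Equiv.Perm (Fin n) := e₁.extendSubtype with hπ₀
  have hπ₀mem : ∀ x, x ∈ N → π₀ x ∈ T := fun x hx => e₁.extendSubtype_mem x hx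
  have hπ₀not : ∀ x, x ∉ N → π₀ x ∉ T := fun x hx => e₁.extendSubtype_not_mem x hx
  set π : Equiv.Perm (Fin n) := π₀.trans (Equiv.swap (π₀ v) z0) with hπ
  have hπv : π v = z0 := by
    rw [hπ]
    simp [Equiv.swap_apply_left]
  have hπmem : ∀ x, x ∈ N → π x ∈ T := by
    intro x hx
    have h1 : π₀ x ∈ T := hπ₀mem x hx
    have h2 : π₀ x ≠ π₀ v := fun h => hvN (π₀.injective h ▸ hx)
    have h3 : π₀ x ≠ z0 := fun h => h0T (h ▸ h1)
    rw [hπ]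
    simpa [Equiv.swap_apply_of_ne_of_ne h2 h3] using h1
  have hπnot : ∀ x, x ∉ N → x ≠ v → π x ∉ T := by
    intro x hx hxv
    have h1 : π₀ x ∉ T := hπ₀not x hx
    have h2 : π₀ x ≠ π₀ v := fun h => hxv (π₀.injective h)
    by_cases h3 : π₀ x = z0
    · rw [hπ]
      simp only [Equiv.trans_apply, h3, Equiv.swap_apply_right]
      exact hπ₀not v hvN
    · rw [hπ]
      simpa [Equiv.swap_apply_of_ne_of_ne h2 h3] using h1
  have hmemiff : ∀ x, π x ∈ T ↔ x ∈ N := by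
    intro x
    constructor
    · intro h
      by_contra hc
      by_cases hxv : x = v
      · subst hxv
        rw [hπv] at h
        exact h0T h
      · exact hπnot x hc hxv h
    · exact hπmem x
  have hz0iff : ∀ x, π x = z0 ↔ x = v := by
    intro x
    constructor
    · intro h
      exact π.injective (h.trans hπv.symm)
    · rintro rfl
      exact hπv
  have hGadj : ∀ a b, G.Adj a b ↔ ((a = v ∧ b ∈ N) ∨ (b = v ∧ a ∈ N)) := by
    intro a b
    constructor
    · intro h
      rcases hv a b h with rfl | rfl
      · exact Or.inl ⟨rfl, by rw [hN, SimpleGraph.mem_neighborFinset]; exact h⟩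
      · exact Or.inr ⟨rfl, by rw [hN, SimpleGraph.mem_neighborFinset]; exact h.symm⟩
    · rintro (⟨rfl, hb⟩ | ⟨rfl, ha⟩)
      · rw [hN, SimpleGraph.mem_neighborFinset] at hb
        exact hb
      · rw [hN, SimpleGraph.mem_neighborFinset] at ha
        exact ha.symm
  have hval0 : ∀ x : Fin n, x.val = 0 ↔ x = z0 := by
    intro x
    constructor
    · intro h; exact Fin.ext (by simp [h, hz0])
    · rintro rfl; rfl
  have hmemval : ∀ x : Fin n, (1 ≤ x.val ∧ x.val ≤ m) ↔ x ∈ T := by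
    intro x
    rw [hT]
    simp
  refine ⟨⟨π, ?_⟩⟩
  intro a b
  show (starPlusIsolated n m).Adj (π a) (π b) ↔ G.Adj a b
  rw [hGadj a b]
  show ((π a).val = 0 ∧ 1 ≤ (π b).val ∧ (π b).val ≤ m) ∨
      ((π b).val = 0 ∧ 1 ≤ (π a).val ∧ (π a).val ≤ m) ↔ _
  rw [hval0, hval0, hmemval, hmemval, hz0iff, hz0iff, hmemiff, hmemiff]

theorem energy_of_iso {m : ℕ} (hm : G.edgeFinset.card = m) (hn : 1 ≤ n)
    (e : G ≃g starPlusIsolated n m) : perEnergy G = 2 * Real.sqrt m := by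
  set z0 : Fin n := ⟨0, by omega⟩ with hz0
  set v : Fin n := e.symm z0 with hvdef
  have hev : e v = z0 := by rw [hvdef]; exact e.apply_symm_apply z0
  have hv : ∀ a b, G.Adj a b → a = v ∨ b = v := by
    intro a b h
    have h2 : (starPlusIsolated n m).Adj (e a) (e b) := e.map_adj_iff.mpr h
    rcases h2 with ⟨h0, -⟩ | ⟨h0, -⟩
    · left
      have ha : e a = z0 := Fin.ext (by simpa [hz0] using h0)
      rw [hvdef, ← ha]
      exact (e.symm_apply_apply a).symm
    · right
      have hb : e b = z0 := Fin.ext (by simpa [hz0] using h0)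
      rw [hvdef, ← hb]
      exact (e.symm_apply_apply b).symm
  have hdeg : G.degree v = m := by rw [degree_eq_card G v hv, hm]
  have hP : graphPermPoly G = Polynomial.X ^ n +
      Polynomial.C ((m : ℂ)) * Polynomial.X ^ (n - 2) := by
    rw [permPoly_star G v hv, hdeg]
  rcases Nat.eq_zero_or_pos m with hm0 | hm1
  · subst hm0
    have hP' : graphPermPoly G = Polynomial.X ^ n := by
      rw [hP]
      simp
    rw [perEnergy, hP', Polynomial.roots_pow, Polynomial.roots_X]
    rw [Multiset.nsmul_singleton, Multiset.map_replicate, Multiset.sum_replicate]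
    simp
  · have hnb : (G.neighborFinset v).Nonempty := by
      rw [← Finset.card_pos]
      have : (G.neighborFinset v).card = G.degree v := rfl
      omega
    obtain ⟨j, hj⟩ := hnb
    rw [SimpleGraph.mem_neighborFinset] at hj
    have hn2 : 2 ≤ n := two_le_of_ne (G.ne_of_adj hj)
    rw [perEnergy, hP]
    exact energy_of_form hn2 m

end StarPerm

open StarPerm in
/-- **Characterization of equality in the lower bound.**
For a simple graph `G` on `n` vertices with `m` edges, `E_per(G) = 2√m` iff
`G ≅ K_{1,m} ⊔ (n−m−1)K_1`. -/
theorem perEnergy_eq_two_sqrt_iff_star {n m : ℕ} (G : SimpleGraph (Fin n))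
    [DecidableRel G.Adj] (hm : G.edgeFinset.card = m) :
    perEnergy G = 2 * Real.sqrt (m : ℝ) ↔ Nonempty (G ≃g starPlusIsolated n m) := by
  rcases Nat.eq_zero_or_pos n with hn0 | hn1
  · subst hn0
    have hm0 : m = 0 := by
      rw [← hm, Finset.card_eq_zero]
      ext e
      simp only [SimpleGraph.mem_edgeFinset, Finset.notMem_empty, iff_false]
      induction e with
      | _ a b => exact a.elim0
    have hP : graphPermPoly G = 1 := by
      rw [graphPermPoly_eq G]
      unfold permPoly
      exact Matrix.permanent_isEmpty
    constructor
    · intro _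
      refine ⟨⟨Equiv.refl _, ?_⟩⟩
      intro a b
      exact a.elim0
    · intro _
      rw [perEnergy, hP, Polynomial.roots_one]
      simp [hm0]
  · constructor
    · intro hE
      rcases Nat.eq_zero_or_pos m with hm0 | hm1
      · have hnoadj : ∀ a b : Fin n, ¬ G.Adj a b := by
          intro a b hab
          have : s(a, b) ∈ G.edgeFinset := SimpleGraph.mem_edgeFinset.mpr hab
          have hcz : G.edgeFinset = ∅ := Finset.card_eq_zero.mp (by omega)
          rw [hcz] at this
          exact Finset.notMem_empty _ this
        exact iso_of_common G hn1 ⟨0, by omega⟩ (fun a b h => absurd h (hnoadj a b)) hm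
      · have hedge : ∃ a b : Fin n, G.Adj a b := by
          have hne : G.edgeFinset.Nonempty := Finset.card_pos.mp (by omega)
          obtain ⟨e, he⟩ := hne
          revert he
          induction e with
          | _ a b => exact fun he => ⟨a, b, SimpleGraph.mem_edgeFinset.mp he⟩
        obtain ⟨a, b, hab⟩ := hedge
        have hn2 : 2 ≤ n := two_le_of_ne hab.ne
        have hpoly := poly_eq_of_energy G hm hm1 hn2 hE
        obtain ⟨v, hv⟩ := common_vertex G
          (fun x y z h1 h2 h3 => no_triangle G hpoly x y z h1 h2 h3)
          (fun x y z w h1 h2 h3 h4 h5 h6 => no_two_matching G hpoly x y z w h1 h2 h3 h4 h5 h6)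
          a b hab
        exact iso_of_common G hn1 v hv hm
    · rintro ⟨e⟩
      exact energy_of_iso G hm hn1 e
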